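/- For all positive real numbers a, b, c, d, set A = a·b + (1/2)·a·d + (1/2)·c·b and B = c·d + (1/2)·a·d + (1/2)·c·b. Then the function f(t) = -A·log(t) - B·log(1-t) on the open interval (0,1) attains a strict unique minimum at t* = (1/2)·( a/(a+c) + b/(b+d) ); that is, for every t in (0,1) with t ≠ t*, f(t*) < f(t). -/

import Mathlib

/-- Generic strict minimality of cross entropy: for `A,B > 0` and `p = A/(A+B)`,
any `t ∈ (0,1)` with `t ≠ p` gives a strictly larger value of `-A log t - B log(1-t)`. -/
lemma ce_strict_min (A B t : ℝ) (hA : 0 < A) (hB : 0 < B)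
    (ht0 : 0 < t) (ht1 : t < 1) (hne : t ≠ A / (A + B)) :
    -A * Real.log (A / (A + B)) - B * Real.log (1 - A / (A + B))
      < -A * Real.log t - B * Real.log (1 - t) := by
  have hAB : 0 < A + B := by linarith
  set p := A / (A + B) with hp
  have hp0 : 0 < p := div_pos hA hAB
  have hp1 : p < 1 := (div_lt_one hAB).mpr (by linarith)
  have h1mp : 1 - p = B / (A + B) := by field_simp [hp]; rw [hp, sub_mul, div_mul_cancel₀ A hAB.ne']; ring
  -- log t - log p < t/p - 1 strictly, and log(1-t) - log(1-p) ≤ (1-t)/(1-p) - 1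
  have key1 : Real.log t - Real.log p < t / p - 1 := by
    have : Real.log (t / p) < t / p - 1 :=
      Real.log_lt_sub_one_of_pos (div_pos ht0 hp0)
        (fun h => hne ((div_eq_one_iff_eq (ne_of_gt hp0)).mp h))
    rwa [Real.log_div (ne_of_gt ht0) (ne_of_gt hp0)] at this
  have key2 : Real.log (1 - t) - Real.log (1 - p) ≤ (1 - t) / (1 - p) - 1 := by
    have : Real.log ((1 - t) / (1 - p)) ≤ (1 - t) / (1 - p) - 1 :=
      Real.log_le_sub_one_of_pos (div_pos (by linarith) (by linarith))
    rwa [Real.log_div (by linarith) (by linarith)] at this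
  have sum0 : A * (t / p - 1) + B * ((1 - t) / (1 - p) - 1) = 0 := by
    rw [hp, h1mp]
    field_simp
    ring
  nlinarith [mul_lt_mul_of_pos_left key1 hA, mul_le_mul_of_nonneg_left key2 hB.le]

theorem spacgan_rf_optimal_discriminator_pointwise
    (a b c d : ℝ) (ha : 0 < a) (hb : 0 < b) (hc : 0 < c) (hd : 0 < d) :
    ∀ t ∈ Set.Ioo (0 : ℝ) 1,
      t ≠ (1 / 2) * (a / (a + c) + b / (b + d)) →
      (-(a * b + (1 / 2) * (a * d) + (1 / 2) * (c * b))
          * Real.log ((1 / 2) * (a / (a + c) + b / (b + d)))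
        - (c * d + (1 / 2) * (a * d) + (1 / 2) * (c * b))
          * Real.log (1 - (1 / 2) * (a / (a + c) + b / (b + d))))
      < (-(a * b + (1 / 2) * (a * d) + (1 / 2) * (c * b)) * Real.log t
          - (c * d + (1 / 2) * (a * d) + (1 / 2) * (c * b)) * Real.log (1 - t)) := by
  intro t ht hne
  obtain ⟨ht0, ht1⟩ := ht
  set A := a * b + (1 / 2) * (a * d) + (1 / 2) * (c * b) with hA
  set B := c * d + (1 / 2) * (a * d) + (1 / 2) * (c * b) with hB
  have hApos : 0 < A := by positivity
  have hBpos : 0 < B := by positivity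
  have hpeq : (1 / 2) * (a / (a + c) + b / (b + d)) = A / (A + B) := by
    rw [hA, hB]
    have h1 : a + c ≠ 0 := by positivity
    have h2 : b + d ≠ 0 := by positivity
    have h3 : a * b + (1 / 2) * (a * d) + (1 / 2) * (c * b) +
        (c * d + (1 / 2) * (a * d) + (1 / 2) * (c * b)) ≠ 0 := by positivity
    field_simp
    ring
  rw [hpeq] at hne ⊢
  exact ce_strict_min A B t hApos hBpos ht0 ht1 hne
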